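/- Let E and F be vector lattices with F Dedekind complete, s ≥ 2. The set of orthosymmetric s-linear maps of order bounded variation from E^s to F is a band in the vector lattice of all s-linear maps of order bounded variation from E^s to F. -/

import Mathlib

open scoped BigOperators

/-- `l` is a (finite positive) partition of `x`. -/
def IsPartition {E : Type*} [AddCommMonoid E] [PartialOrder E] (x : E) (l : List E) : Prop :=
  (∀ a ∈ l, 0 ≤ a) ∧ l.sum = x

/-- The partition sum `Σ_{k₁,...,k_s} |T(a₁ₖ₁, ..., a_sₖ_s)|`. -/
noncomputable def mlPartSum {E F : Type*} [AddCommGroup E] [Lattice E] [Module ℝ E]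
    [AddCommGroup F] [Lattice F] [Module ℝ F] {s : ℕ}
    (T : MultilinearMap ℝ (fun _ : Fin s => E) F) (a : Fin s → List E) : F :=
  ∑ k : (∀ i : Fin s, Fin (a i).length), |T (fun i => (a i).get (k i))|

/-- The set of all partition sums of `T` at the positive tuple `x`. -/
def mlSums {E F : Type*} [AddCommGroup E] [Lattice E] [Module ℝ E]
    [AddCommGroup F] [Lattice F] [Module ℝ F] {s : ℕ}
    (T : MultilinearMap ℝ (fun _ : Fin s => E) F) (x : Fin s → E) : Set F :=
  { y | ∃ a : Fin s → List E, (∀ i, IsPartition (x i) (a i)) ∧ y = mlPartSum T a }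

/-- `T` is of order bounded variation. -/
def MlOBV {E F : Type*} [AddCommGroup E] [Lattice E] [Module ℝ E]
    [AddCommGroup F] [Lattice F] [Module ℝ F] {s : ℕ}
    (T : MultilinearMap ℝ (fun _ : Fin s => E) F) : Prop :=
  ∀ x : Fin s → E, (∀ i, 0 ≤ x i) → BddAbove (mlSums T x)

/-- `T` is orthosymmetric. -/
def MlOrthosym {E F : Type*} [AddCommGroup E] [Lattice E] [Module ℝ E]
    [AddCommGroup F] [Lattice F] [Module ℝ F] {s : ℕ}
    (T : MultilinearMap ℝ (fun _ : Fin s => E) F) : Prop :=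
  ∀ v : Fin s → E, (∃ i j, i ≠ j ∧ |v i| ⊓ |v j| = 0) → T v = 0

section Helpers

private lemma listSum_nonneg' {G : Type*} [AddCommMonoid G] [PartialOrder G]
    [CovariantClass G G (· + ·) (· ≤ ·)] :
    ∀ l : List G, (∀ a ∈ l, 0 ≤ a) → 0 ≤ l.sum
  | [], _ => le_of_eq List.sum_nil.symm
  | x :: t, h => by
      rw [List.sum_cons]
      have h1 : 0 ≤ x := h x (List.mem_cons_self)
      have h2 : 0 ≤ t.sum := listSum_nonneg' t fun a ha => h a (List.mem_cons_of_mem _ ha)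
      calc (0 : G) ≤ t.sum := h2
        _ = t.sum + 0 := (add_zero _).symm
        _ ≤ t.sum + x := add_le_add_right h1 _
        _ = x + t.sum := add_comm _ _

private lemma mem_le_listSum {G : Type*} [AddCommMonoid G] [PartialOrder G]
    [CovariantClass G G (· + ·) (· ≤ ·)] :
    ∀ l : List G, (∀ a ∈ l, 0 ≤ a) → ∀ x ∈ l, x ≤ l.sum
  | x :: t, h, y, hy => by
      rw [List.sum_cons]
      rcases List.mem_cons.mp hy with rfl | hyt
      · calc y = y + 0 := (add_zero y).symm
          _ ≤ y + t.sum := add_le_add_right (listSum_nonneg' t fun a ha => h a (List.mem_cons_of_mem _ ha)) y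
      · calc y ≤ t.sum := mem_le_listSum t (fun a ha => h a (List.mem_cons_of_mem _ ha)) y hyt
          _ = 0 + t.sum := (zero_add _).symm
          _ ≤ x + t.sum := by
              rw [add_comm (0:G), add_comm x]
              exact add_le_add_right (h x (List.mem_cons_self)) _

variable {E F : Type*} [AddCommGroup E] [Lattice E] [CovariantClass E E (· + ·) (· ≤ ·)]
  [Module ℝ E] [AddCommGroup F] [Lattice F] [CovariantClass F F (· + ·) (· ≤ ·)]
  [Module ℝ F] {s : ℕ}
set_option linter.unusedSectionVars false

private lemma posPart_le_abs' (a : E) : a⁺ ≤ |a| := by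
  rw [posPart_def]; exact sup_le (le_abs_self a) (abs_nonneg a)

private lemma negPart_le_abs' (a : E) : a⁻ ≤ |a| := by
  rw [negPart_def]; exact sup_le (neg_le_abs a) (abs_nonneg a)

private lemma expand_zero (T : MultilinearMap ℝ (fun _ : Fin s => E) F) (i j : Fin s)
    (H : ∀ u : Fin s → E, (∀ k, 0 ≤ u k) → u i ⊓ u j = 0 → T u = 0)
    (v : Fin s → E) (hv : |v i| ⊓ |v j| = 0) : T v = 0 := by
  have hw : ∀ t : Finset (Fin s),
      T (t.piecewise (fun k => (v k)⁺) fun k => -(v k)⁻) = 0 := by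
    intro t
    have hrw : (t.piecewise (fun k => (v k)⁺) fun k => -(v k)⁻)
        = fun k => (if k ∈ t then (1 : ℝ) else -1) •
            (t.piecewise (fun k => (v k)⁺) (fun k => (v k)⁻) k) := by
      funext k
      by_cases hk : k ∈ t <;> simp [Finset.piecewise, hk]
    rw [hrw, T.map_smul_univ]
    have hnn : ∀ k, 0 ≤ t.piecewise (fun k => (v k)⁺) (fun k => (v k)⁻) k := by
      intro k
      by_cases hk : k ∈ t <;> simp [Finset.piecewise, hk, posPart_nonneg, negPart_nonneg]
    have hle : ∀ k, t.piecewise (fun k => (v k)⁺) (fun k => (v k)⁻) k ≤ |v k| := by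
      intro k
      by_cases hk : k ∈ t <;>
        simp [Finset.piecewise, hk, posPart_le_abs', negPart_le_abs']
    have hz : T (t.piecewise (fun k => (v k)⁺) fun k => (v k)⁻) = 0 := by
      refine H _ hnn (le_antisymm ?_ (le_inf (hnn i) (hnn j)))
      exact hv ▸ inf_le_inf (hle i) (hle j)
    rw [hz, smul_zero]
  have hsum : v = (fun k => (v k)⁺) + fun k => -(v k)⁻ := by
    funext k
    simp [← sub_eq_add_neg, posPart_sub_negPart]
  calc T v = T ((fun k => (v k)⁺) + fun k => -(v k)⁻) := by rw [← hsum]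
    _ = ∑ t : Finset (Fin s), T (t.piecewise (fun k => (v k)⁺) fun k => -(v k)⁻) :=
        T.map_add_univ _ _
    _ = 0 := Finset.sum_eq_zero fun t _ => hw t

private lemma mlPartSum_trivial (T : MultilinearMap ℝ (fun _ : Fin s => E) F) (u : Fin s → E) :
    mlPartSum T (fun i => [u i]) = |T u| := by
  haveI : ∀ i : Fin s, Unique (Fin (([u i] : List E)).length) :=
    fun i => inferInstanceAs (Unique (Fin 1))
  rw [mlPartSum, Fintype.sum_unique]
  congr 1
  exact congrArg T (funext fun i => by simp)

private lemma trivial_partition (u : Fin s → E) (hu : ∀ i, 0 ≤ u i) :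
    ∀ i, IsPartition (u i) [u i] := by
  intro i
  constructor
  · intro a ha
    rw [List.mem_singleton] at ha
    exact ha ▸ hu i
  · simp

private lemma orthosym_sums_zero (T : MultilinearMap ℝ (fun _ : Fin s => E) F)
    (hT : MlOrthosym T) (i j : Fin s) (hij : i ≠ j)
    (u : Fin s → E) (hu : ∀ k, 0 ≤ u k) (huv : u i ⊓ u j = 0) :
    ∀ y ∈ mlSums T u, y = 0 := by
  rintro y ⟨a, ha, rfl⟩
  refine Finset.sum_eq_zero fun k _ => ?_
  have hz : T (fun i' => (a i').get (k i')) = 0 := by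
    apply hT
    refine ⟨i, j, hij, ?_⟩
    have hnn : ∀ i', 0 ≤ (a i').get (k i') :=
      fun i' => (ha i').1 _ (List.get_mem (a i') (k i'))
    have hle : ∀ i', (a i').get (k i') ≤ u i' := by
      intro i'
      have := mem_le_listSum (a i') (ha i').1 _ (List.get_mem (a i') (k i'))
      rwa [(ha i').2] at this
    rw [abs_of_nonneg (hnn i), abs_of_nonneg (hnn j)]
    exact le_antisymm (huv ▸ inf_le_inf (hle i) (hle j)) (le_inf (hnn i) (hnn j))
  rw [hz, abs_zero]

end Helpers

/-- The orthosymmetric s-linear maps of order bounded variation form a band (an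
order-closed ideal) in the vector lattice of s-linear maps of order bounded variation:
(i) they form an ideal (any `S` whose modulus is dominated by the modulus of an
orthosymmetric map is orthosymmetric), and (ii) they are closed under suprema of
increasing nets. -/
theorem stmt13 {E F : Type*} [AddCommGroup E] [Lattice E]
    [CovariantClass E E (· + ·) (· ≤ ·)] [Module ℝ E]
    [AddCommGroup F] [ConditionallyCompleteLattice F]
    [CovariantClass F F (· + ·) (· ≤ ·)] [Module ℝ F]
    (s : ℕ) (hs : 2 ≤ s) :
    (∀ S T : MultilinearMap ℝ (fun _ : Fin s => E) F, MlOBV S → MlOBV T →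
      MlOrthosym T →
      (∀ x : Fin s → E, (∀ i, 0 ≤ x i) → sSup (mlSums S x) ≤ sSup (mlSums T x)) →
      MlOrthosym S) ∧
    (∀ (ι : Type) [Preorder ι],
      ∀ (Tn : ι → MultilinearMap ℝ (fun _ : Fin s => E) F)
        (T : MultilinearMap ℝ (fun _ : Fin s => E) F),
      (∀ n, MlOBV (Tn n)) → (∀ n, MlOrthosym (Tn n)) → MlOBV T →
      (∀ m n, m ≤ n → ∀ x : Fin s → E, (∀ i, 0 ≤ x i) → Tn m x ≤ Tn n x) →
      (∀ x : Fin s → E, (∀ i, 0 ≤ x i) →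
        IsLUB (Set.range fun n => Tn n x) (T x)) →
      MlOrthosym T) := by
  constructor
  · -- Part (i): the ideal property
    intro S T hS hT hTo h v hv
    obtain ⟨i, j, hij, hinf⟩ := hv
    refine expand_zero S i j ?_ v hinf
    intro u hu huij
    have htriv := trivial_partition u hu
    have hmemS : |S u| ∈ mlSums S u :=
      ⟨fun i => [u i], htriv, (mlPartSum_trivial S u).symm⟩
    have hmemT : mlPartSum T (fun i => [u i]) ∈ mlSums T u :=
      ⟨fun i => [u i], htriv, rfl⟩
    have h1 : |S u| ≤ sSup (mlSums S u) := le_csSup (hS u hu) hmemS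
    have h2 : sSup (mlSums T u) ≤ 0 :=
      csSup_le ⟨_, hmemT⟩ fun y hy =>
        le_of_eq (orthosym_sums_zero T hTo i j hij u hu huij y hy)
    have h3 : |S u| ≤ 0 := le_trans h1 (le_trans (h u hu) h2)
    have h5 : S u ≤ 0 := le_trans (le_abs_self _) h3
    have h6 : -(S u) ≤ 0 := le_trans (neg_le_abs _) h3
    exact le_antisymm h5 (neg_nonpos.mp h6)
  · -- Part (ii): closure under suprema of increasing nets
    intro ι _ Tn T hTnOBV hTno hTOBV hmono hlub v hv
    obtain ⟨i, j, hij, hinf⟩ := hv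
    refine expand_zero T i j ?_ v hinf
    intro u hu huij
    have hTn0 : ∀ n, Tn n u = 0 := by
      intro n
      refine hTno n u ⟨i, j, hij, ?_⟩
      rwa [abs_of_nonneg (hu i), abs_of_nonneg (hu j)]
    have hlubu := hlub u hu
    have hub : T u ≤ 0 := by
      apply hlubu.2
      rintro y ⟨n, rfl⟩
      exact le_of_eq (hTn0 n)
    have hlb : 0 ≤ T u := by
      rcases isEmpty_or_nonempty ι with hι | hι
      · have huniv : T u + T u ∈ upperBounds (Set.range fun n => Tn n u) := by
          rintro y ⟨n, rfl⟩
          exact hι.elim n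
        have := hlubu.2 huniv
        exact (le_add_iff_nonneg_right (T u)).mp this
      · obtain ⟨n⟩ := hι
        have h0 : (0 : F) ∈ Set.range fun n => Tn n u := ⟨n, hTn0 n⟩
        exact hlubu.1 h0
    exact le_antisymm hub hlb
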